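/- Let M be a matroid and let V, R be two independent sets of equal cardinality. Then there exists a bijection φ: V → R such that for every v ∈ V, the set (R \ {φ(v)}) ∪ {v} is independent. -/

import Mathlib

/-- Matroid exchange bijection: for independent sets `V, R` of equal cardinality there is a
bijection `φ : V → R` such that `(R \ {φ v}) ∪ {v}` is independent for all `v ∈ V`. -/
theorem stmt5 {α : Type*} (M : Matroid α) (V R : Set α)
    (hV : M.Indep V) (hR : M.Indep R)
    (hVfin : V.Finite) (hRfin : R.Finite)
    (hcard : V.ncard = R.ncard) :
    ∃ φ : V → R, Function.Bijective φ ∧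
      ∀ v : V, M.Indep ((R \ {(φ v : α)}) ∪ {(v : α)}) := by
  classical
  haveI : Fintype V := hVfin.fintype
  haveI : Fintype R := hRfin.fintype
  set rel : α → α → Prop := fun v r => M.Indep ((R \ {r}) ∪ {v}) with hrel
  -- a counting lemma: an independent set inside the closure of an independent set T
  -- has cardinality at most that of T
  have count : ∀ S T : Set α, M.Indep S → M.Indep T → S ⊆ M.closure T → T.Finite →
      S.ncard ≤ T.ncard := by
    intro S T hS hT hScl hTfin
    obtain ⟨J, hJ, hSJ⟩ := hS.subset_isBasis_of_subset hScl (M.closure_subset_ground T)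
    have hJT : J.encard = T.encard := hJ.encard_eq_encard hT.isBasis_closure
    have hle : S.encard ≤ T.encard := hJT ▸ Set.encard_le_encard hSJ
    rw [Set.ncard, Set.ncard]
    exact ENat.toNat_le_toNat hle hTfin.encard_lt_top.ne
  -- Claim A : every v ∈ V either relates to all of R, or lies in the closure of its neighbors
  have claimA : ∀ v ∈ V, (∀ r ∈ R, rel v r) ∨ v ∈ M.closure {r | r ∈ R ∧ rel v r} := by
    intro v hv
    have hvE : v ∈ M.E := hV.subset_ground hv
    by_cases hvR : v ∈ R
    · left
      intro r _
      exact hR.subset (Set.union_subset Set.diff_subset (by simpa using hvR))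
    by_cases hvcl : v ∈ M.closure R
    · right
      -- take a minimal (by cardinality) subset I ⊆ R with v ∈ closure I
      set 𝒮 : Set (Set α) := {I | I ⊆ R ∧ v ∈ M.closure I} with h𝒮
      have h𝒮fin : 𝒮.Finite := hRfin.finite_subsets.subset fun I hI => hI.1
      obtain ⟨I, hI𝒮, hImin⟩ := Set.exists_min_image 𝒮 Set.ncard h𝒮fin ⟨R, subset_rfl, hvcl⟩
      have hIR : I ⊆ R := hI𝒮.1
      have hIfin : I.Finite := hRfin.subset hIR
      have hImin' : ∀ r ∈ I, v ∉ M.closure (I \ {r}) := by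
        intro r hr hcon
        have h1 : (I \ {r}) ∈ 𝒮 := ⟨Set.diff_subset.trans hIR, hcon⟩
        have h2 := hImin _ h1
        have h3 := Set.ncard_diff_singleton_lt_of_mem hr hIfin
        omega
      -- every r ∈ I is a neighbor of v
      have hInb : ∀ r ∈ I, v ∉ M.closure (R \ {r}) := by
        intro r hrI hcon
        have h1 : v ∈ M.closure (insert r (I \ {r})) := by
          rw [Set.insert_diff_singleton, Set.insert_eq_self.2 hrI]
          exact hI𝒮.2
        have h2 : r ∈ M.closure (insert v (I \ {r})) :=
          Matroid.mem_closure_insert (hImin' r hrI) h1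
        have h3 : r ∈ M.closure (insert v (R \ {r})) :=
          M.closure_subset_closure (Set.insert_subset_insert
            (Set.diff_subset_diff_left hIR)) h2
        rw [Matroid.closure_insert_eq_of_mem_closure hcon] at h3
        exact hR.notMem_closure_diff_of_mem (hIR hrI) h3
      have hIsub : I ⊆ {r | r ∈ R ∧ rel v r} := by
        intro r hrI
        refine ⟨hIR hrI, ?_⟩
        have hind : M.Indep (R \ {r}) := hR.subset Set.diff_subset
        rw [hrel]
        simp only [Set.union_singleton]
        rw [hind.insert_indep_iff_of_notMem (fun h => hvR h.1)]
        exact ⟨hvE, hInb r hrI⟩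
      exact M.closure_subset_closure hIsub hI𝒮.2
    · left
      intro r _
      have hind : M.Indep (R \ {r}) := hR.subset Set.diff_subset
      rw [hrel]
      simp only [Set.union_singleton]
      rw [hind.insert_indep_iff_of_notMem (fun h => hvR h.1)]
      exact ⟨hvE, fun h => hvcl (M.closure_subset_closure Set.diff_subset h)⟩
  -- set up Hall's theorem
  set t : V → Finset R := fun v => Finset.univ.filter (fun r : R => rel ↑v ↑r) with ht
  have hall : ∀ s : Finset V, s.card ≤ (s.biUnion t).card := by
    intro s
    by_cases hfull : ∃ v ∈ s, ∀ r ∈ R, rel ↑v r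
    · obtain ⟨v, hvs, hvfull⟩ := hfull
      have htv : t v = Finset.univ := by
        ext r
        simp [ht, hvfull ↑r r.2]
      have h1 : (Finset.univ : Finset R) ⊆ s.biUnion t := by
        rw [← htv]
        exact Finset.subset_biUnion_of_mem t hvs
      have h2 : Fintype.card R ≤ (s.biUnion t).card := by
        simpa using Finset.card_le_card h1
      have h3 : s.card ≤ Fintype.card V := Finset.card_le_univ s
      have h4 : Fintype.card V = Fintype.card R := by
        rw [← Nat.card_eq_fintype_card, ← Nat.card_eq_fintype_card,
          Nat.card_coe_set_eq, Nat.card_coe_set_eq, hcard]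
      omega
    · push_neg at hfull
      set Ss : Set α := Subtype.val '' (↑s : Set V) with hSs
      set Ts : Set α := Subtype.val '' (↑(s.biUnion t) : Set R) with hTs
      have hTsR : Ts ⊆ R := by
        rintro x ⟨r, _, rfl⟩; exact r.2
      have hSscl : Ss ⊆ M.closure Ts := by
        rintro x ⟨v, hvs, rfl⟩
        have hcl : (v : α) ∈ M.closure {r | r ∈ R ∧ rel ↑v r} := by
          rcases claimA ↑v v.2 with h | h
          · obtain ⟨r, hrR, hnr⟩ := hfull v hvs
            exact absurd (h r hrR) hnr
          · exact h
        refine M.closure_subset_closure ?_ hcl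
        rintro r ⟨hrR, hrel⟩
        refine ⟨⟨r, hrR⟩, ?_, rfl⟩
        simp only [Finset.coe_biUnion, Set.mem_iUnion]
        exact ⟨v, hvs, by simp [ht, hrel]⟩
      have hcount := count Ss Ts (hV.subset (by rintro x ⟨v, _, rfl⟩; exact v.2))
        (hR.subset hTsR) hSscl (hRfin.subset hTsR)
      have h1 : Ss.ncard = s.card := by
        rw [hSs, Set.ncard_image_of_injective _ Subtype.coe_injective, Set.ncard_coe_finset]
      have h2 : Ts.ncard = (s.biUnion t).card := by
        rw [hTs, Set.ncard_image_of_injective _ Subtype.coe_injective, Set.ncard_coe_finset]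
      omega
  obtain ⟨f, hinj, hf⟩ := (Finset.all_card_le_biUnion_card_iff_exists_injective t).mp hall
  have hbij : Function.Bijective f := by
    refine (Fintype.bijective_iff_injective_and_card f).2 ⟨hinj, ?_⟩
    rw [← Nat.card_eq_fintype_card, ← Nat.card_eq_fintype_card,
      Nat.card_coe_set_eq, Nat.card_coe_set_eq, hcard]
  refine ⟨f, hbij, fun v => ?_⟩
  have := hf v
  simp only [ht, Finset.mem_filter] at this
  exact this.2
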